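/- Let w, v, c ∈ Q and let 1 ≤ i, k, p ≤ m with k ≠ p. Then the triple commutator [E_{i,w}, [E*_{k,v}, E*_{p,c}]] acts on M as follows: (1) if i = p, it sends (z,x,f) to (z − f_k(x)·⟨c,v⟩·w, x − f_k(x)·⟨c,v⟩·q(w)·x_p, f + (⟨w,z⟩ + f(x_p)·q(w) − f_k(x)·⟨c,v⟩·q(w))·⟨c,v⟩·f_k); (2) if i = k, it sends (z,x,f) to (z + f_p(x)·⟨c,v⟩·w, x + f_p(x)·⟨c,v⟩·q(w)·x_k, f − (⟨w,z⟩ + f(x_k)·q(w) + f_p(x)·⟨c,v⟩·q(w))·⟨c,v⟩·f_p); (3) if i ≠ p and i ≠ k, it is the identity automorphism of M. -/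

import Mathlib

open QuadraticMap
open scoped commutatorElement

/-- The DSER elementary orthogonal transformation `E_{i,w}` on `M = Q ⊕ P ⊕ P*`,
`P = A^m`:  `E_{i,w}(z,x,f) = (z − f(xᵢ)•w, x + ⟨w,z⟩•xᵢ − f(xᵢ)·q(w)•xᵢ, f)`. -/
noncomputable def Eplus {A Q : Type*} [CommRing A] [AddCommGroup Q] [Module A Q]
    {m : ℕ} (q : QuadraticForm A Q) (i : Fin m) (w : Q) :
    (Q × (Fin m → A) × (Fin m → A)) ≃ₗ[A] (Q × (Fin m → A) × (Fin m → A)) where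
  toFun p := (p.1 - p.2.2 i • w,
    p.2.1 + polar ⇑q w p.1 • (Pi.single i 1 : Fin m → A)
      - (p.2.2 i * q w) • (Pi.single i 1 : Fin m → A),
    p.2.2)
  invFun p := (p.1 + p.2.2 i • w,
    p.2.1 - polar ⇑q w p.1 • (Pi.single i 1 : Fin m → A)
      - (p.2.2 i * q w) • (Pi.single i 1 : Fin m → A),
    p.2.2)
  map_add' p p' := by
    obtain ⟨z, x, f⟩ := p
    obtain ⟨z', x', f'⟩ := p'
    refine Prod.ext ?_ (Prod.ext ?_ rfl)
    · show z + z' - (f i + f' i) • w = (z - f i • w) + (z' - f' i • w)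
      module
    · show x + x' + polar ⇑q w (z + z') • (Pi.single i 1 : Fin m → A)
        - ((f i + f' i) * q w) • (Pi.single i 1 : Fin m → A) = _
      rw [polar_add_right]
      show _ = (x + polar ⇑q w z • (Pi.single i 1 : Fin m → A) - (f i * q w) • (Pi.single i 1 : Fin m → A))
        + (x' + polar ⇑q w z' • (Pi.single i 1 : Fin m → A) - (f' i * q w) • (Pi.single i 1 : Fin m → A))
      module
  map_smul' a p := by
    obtain ⟨z, x, f⟩ := p
    refine Prod.ext ?_ (Prod.ext ?_ rfl)
    · show a • z - (a • f) i • w = a • (z - f i • w)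
      simp only [Pi.smul_apply, smul_eq_mul]
      module
    · show a • x + polar ⇑q w (a • z) • (Pi.single i 1 : Fin m → A)
        - ((a • f) i * q w) • (Pi.single i 1 : Fin m → A)
        = a • (x + polar ⇑q w z • (Pi.single i 1 : Fin m → A) - (f i * q w) • (Pi.single i 1 : Fin m → A))
      rw [polar_smul_right]
      simp only [Pi.smul_apply, smul_eq_mul]
      module
  left_inv p := by
    obtain ⟨z, x, f⟩ := p
    refine Prod.ext ?_ (Prod.ext ?_ rfl)
    · show z - f i • w + f i • w = z
      module
    · show x + polar ⇑q w z • (Pi.single i 1 : Fin m → A) - (f i * q w) • (Pi.single i 1 : Fin m → A)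
        - polar ⇑q w (z - f i • w) • (Pi.single i 1 : Fin m → A)
        - (f i * q w) • (Pi.single i 1 : Fin m → A) = x
      rw [polar_sub_right, polar_smul_right, polar_self]
      simp only [smul_eq_mul]
      module
  right_inv p := by
    obtain ⟨z, x, f⟩ := p
    refine Prod.ext ?_ (Prod.ext ?_ rfl)
    · show z + f i • w - f i • w = z
      module
    · show x - polar ⇑q w z • (Pi.single i 1 : Fin m → A) - (f i * q w) • (Pi.single i 1 : Fin m → A)
        + polar ⇑q w (z + f i • w) • (Pi.single i 1 : Fin m → A)
        - (f i * q w) • (Pi.single i 1 : Fin m → A) = x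
      rw [polar_add_right, polar_smul_right, polar_self]
      simp only [smul_eq_mul]
      module

/-- The DSER elementary orthogonal transformation `E*_{i,w}` on `M = Q ⊕ P ⊕ P*`:
`E*_{i,w}(z,x,f) = (z − fᵢ(x)•w, x, f + ⟨w,z⟩•fᵢ − fᵢ(x)·q(w)•fᵢ)`. -/
noncomputable def Estar {A Q : Type*} [CommRing A] [AddCommGroup Q] [Module A Q]
    {m : ℕ} (q : QuadraticForm A Q) (i : Fin m) (w : Q) :
    (Q × (Fin m → A) × (Fin m → A)) ≃ₗ[A] (Q × (Fin m → A) × (Fin m → A)) where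
  toFun p := (p.1 - p.2.1 i • w,
    p.2.1,
    p.2.2 + polar ⇑q w p.1 • (Pi.single i 1 : Fin m → A)
      - (p.2.1 i * q w) • (Pi.single i 1 : Fin m → A))
  invFun p := (p.1 + p.2.1 i • w,
    p.2.1,
    p.2.2 - polar ⇑q w p.1 • (Pi.single i 1 : Fin m → A)
      - (p.2.1 i * q w) • (Pi.single i 1 : Fin m → A))
  map_add' p p' := by
    obtain ⟨z, x, f⟩ := p
    obtain ⟨z', x', f'⟩ := p'
    refine Prod.ext ?_ (Prod.ext rfl ?_)
    · show z + z' - (x i + x' i) • w = (z - x i • w) + (z' - x' i • w)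
      module
    · show f + f' + polar ⇑q w (z + z') • (Pi.single i 1 : Fin m → A)
        - ((x i + x' i) * q w) • (Pi.single i 1 : Fin m → A) = _
      rw [polar_add_right]
      show _ = (f + polar ⇑q w z • (Pi.single i 1 : Fin m → A)
          - (x i * q w) • (Pi.single i 1 : Fin m → A))
        + (f' + polar ⇑q w z' • (Pi.single i 1 : Fin m → A)
          - (x' i * q w) • (Pi.single i 1 : Fin m → A))
      module
  map_smul' a p := by
    obtain ⟨z, x, f⟩ := p
    refine Prod.ext ?_ (Prod.ext rfl ?_)
    · show a • z - (a • x) i • w = a • (z - x i • w)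
      simp only [Pi.smul_apply, smul_eq_mul]
      module
    · show a • f + polar ⇑q w (a • z) • (Pi.single i 1 : Fin m → A)
        - ((a • x) i * q w) • (Pi.single i 1 : Fin m → A)
        = a • (f + polar ⇑q w z • (Pi.single i 1 : Fin m → A)
          - (x i * q w) • (Pi.single i 1 : Fin m → A))
      rw [polar_smul_right]
      simp only [Pi.smul_apply, smul_eq_mul]
      module
  left_inv p := by
    obtain ⟨z, x, f⟩ := p
    refine Prod.ext ?_ (Prod.ext rfl ?_)
    · show z - x i • w + x i • w = z
      module
    · show f + polar ⇑q w z • (Pi.single i 1 : Fin m → A)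
        - (x i * q w) • (Pi.single i 1 : Fin m → A)
        - polar ⇑q w (z - x i • w) • (Pi.single i 1 : Fin m → A)
        - (x i * q w) • (Pi.single i 1 : Fin m → A) = f
      rw [polar_sub_right, polar_smul_right, polar_self]
      simp only [smul_eq_mul]
      module
  right_inv p := by
    obtain ⟨z, x, f⟩ := p
    refine Prod.ext ?_ (Prod.ext rfl ?_)
    · show z + x i • w - x i • w = z
      module
    · show f - polar ⇑q w z • (Pi.single i 1 : Fin m → A)
        - (x i * q w) • (Pi.single i 1 : Fin m → A)
        + polar ⇑q w (z + x i • w) • (Pi.single i 1 : Fin m → A)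
        - (x i * q w) • (Pi.single i 1 : Fin m → A) = f
      rw [polar_add_right, polar_smul_right, polar_self]
      simp only [smul_eq_mul]
      module


section Aux
variable {A Q : Type*} [CommRing A] [AddCommGroup Q] [Module A Q] {m : ℕ}

lemma Eplus_apply (q : QuadraticForm A Q) (i : Fin m) (w : Q) (z : Q) (x f : Fin m → A) :
    Eplus q i w (z, x, f) = (z - f i • w,
      x + polar ⇑q w z • (Pi.single i 1 : Fin m → A) - (f i * q w) • (Pi.single i 1 : Fin m → A),
      f) := rfl

lemma Eplus_symm_apply (q : QuadraticForm A Q) (i : Fin m) (w : Q) (z : Q) (x f : Fin m → A) :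
    (Eplus q i w).symm (z, x, f) = (z + f i • w,
      x - polar ⇑q w z • (Pi.single i 1 : Fin m → A) - (f i * q w) • (Pi.single i 1 : Fin m → A),
      f) := rfl

lemma Estar_apply (q : QuadraticForm A Q) (i : Fin m) (w : Q) (z : Q) (x f : Fin m → A) :
    Estar q i w (z, x, f) = (z - x i • w, x,
      f + polar ⇑q w z • (Pi.single i 1 : Fin m → A) - (x i * q w) • (Pi.single i 1 : Fin m → A)) := rfl

lemma Estar_symm_apply (q : QuadraticForm A Q) (i : Fin m) (w : Q) (z : Q) (x f : Fin m → A) :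
    (Estar q i w).symm (z, x, f) = (z + x i • w, x,
      f - polar ⇑q w z • (Pi.single i 1 : Fin m → A) - (x i * q w) • (Pi.single i 1 : Fin m → A)) := rfl

lemma Estar_comm_apply (q : QuadraticForm A Q) (k p : Fin m) (hkp : k ≠ p) (v c : Q)
    (z : Q) (x f : Fin m → A) :
    ⁅Estar q k v, Estar q p c⁆ (z, x, f)
      = (z, x, f - (x p * polar ⇑q c v) • (Pi.single k 1 : Fin m → A)
          + (x k * polar ⇑q c v) • (Pi.single p 1 : Fin m → A)) := by
  rw [commutatorElement_def]
  show Estar q k v (Estar q p c ((Estar q k v).symm ((Estar q p c).symm (z, x, f)))) = _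
  rw [Estar_symm_apply, Estar_symm_apply, Estar_apply, Estar_apply]
  simp only [Pi.add_apply, Pi.sub_apply, Pi.smul_apply, Pi.single_eq_same,
    Pi.single_eq_of_ne hkp, Pi.single_eq_of_ne (Ne.symm hkp), smul_eq_mul, mul_one, mul_zero,
    polar_add_right, polar_sub_right, polar_smul_right, polar_self, polar_comm ⇑q v c]
  refine Prod.ext (by module) (Prod.ext rfl ?_)
  module

end Aux

theorem triple_commutator_Eplus_EstarEstar
    {A Q : Type*} [CommRing A] [Invertible (2 : A)] [AddCommGroup Q] [Module A Q]
    {m : ℕ} (q : QuadraticForm A Q) (i k p : Fin m) (hkp : k ≠ p)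
    (w v c : Q) :
    (i = p → ∀ (z : Q) (x f : Fin m → A),
      ⁅Eplus q i w, ⁅Estar q k v, Estar q p c⁆⁆ (z, x, f)
        = (z - (x k * polar ⇑q c v) • w,
           x - (x k * polar ⇑q c v * q w) • (Pi.single p 1 : Fin m → A),
           f + ((polar ⇑q w z + f p * q w - x k * polar ⇑q c v * q w)
               * polar ⇑q c v) • (Pi.single k 1 : Fin m → A))) ∧
    (i = k → ∀ (z : Q) (x f : Fin m → A),
      ⁅Eplus q i w, ⁅Estar q k v, Estar q p c⁆⁆ (z, x, f)
        = (z + (x p * polar ⇑q c v) • w,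
           x + (x p * polar ⇑q c v * q w) • (Pi.single k 1 : Fin m → A),
           f - ((polar ⇑q w z + f k * q w + x p * polar ⇑q c v * q w)
               * polar ⇑q c v) • (Pi.single p 1 : Fin m → A))) ∧
    (i ≠ p → i ≠ k → ⁅Eplus q i w, ⁅Estar q k v, Estar q p c⁆⁆ = 1) := by
  have key : ∀ (z : Q) (x f : Fin m → A),
      ⁅Eplus q i w, ⁅Estar q k v, Estar q p c⁆⁆ (z, x, f)
        = Eplus q i w (⁅Estar q k v, Estar q p c⁆
            ((Eplus q i w).symm (⁅Estar q p c, Estar q k v⁆ (z, x, f)))) := by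
    intro z x f
    rw [commutatorElement_def, commutatorElement_inv]
    rfl
  refine ⟨?_, ?_, ?_⟩
  · intro hip; subst i; intro z x f
    rw [key, Estar_comm_apply q p k (Ne.symm hkp), Eplus_symm_apply,
      Estar_comm_apply q k p hkp, Eplus_apply]
    simp only [Pi.add_apply, Pi.sub_apply, Pi.smul_apply, Pi.single_eq_same,
      Pi.single_eq_of_ne hkp, Pi.single_eq_of_ne (Ne.symm hkp), smul_eq_mul, mul_one, mul_zero,
      polar_add_right, polar_sub_right, polar_smul_right, polar_self, polar_comm ⇑q v c]
    refine Prod.ext (by module) (Prod.ext (by module) (by module))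
  · intro hik; subst i; intro z x f
    rw [key, Estar_comm_apply q p k (Ne.symm hkp), Eplus_symm_apply,
      Estar_comm_apply q k p hkp, Eplus_apply]
    simp only [Pi.add_apply, Pi.sub_apply, Pi.smul_apply, Pi.single_eq_same,
      Pi.single_eq_of_ne hkp, Pi.single_eq_of_ne (Ne.symm hkp), smul_eq_mul, mul_one, mul_zero,
      polar_add_right, polar_sub_right, polar_smul_right, polar_self, polar_comm ⇑q v c]
    refine Prod.ext (by module) (Prod.ext (by module) (by module))
  · intro hip hik
    ext ⟨z, x, f⟩ : 1
    rw [key, Estar_comm_apply q p k (Ne.symm hkp), Eplus_symm_apply,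
      Estar_comm_apply q k p hkp, Eplus_apply]
    show _ = (z, x, f)
    simp only [Pi.add_apply, Pi.sub_apply, Pi.smul_apply, Pi.single_eq_same,
      Pi.single_eq_of_ne hkp, Pi.single_eq_of_ne (Ne.symm hkp),
      Pi.single_eq_of_ne hip, Pi.single_eq_of_ne hik,
      Pi.single_eq_of_ne (Ne.symm hip), Pi.single_eq_of_ne (Ne.symm hik),
      smul_eq_mul, mul_one, mul_zero,
      polar_add_right, polar_sub_right, polar_smul_right, polar_self, polar_comm ⇑q v c]
    refine Prod.ext (by module) (Prod.ext (by module) (by module))
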